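/- Let T=(V,E) be a finite tree and U ⊆ V an independent set. Then (T,U) is a yes-instance of Ext VC if and only if there is no subtree T'=(V',E') of T that is induced edge full with respect to (T,U) such that the black-and-white tree T'[(U∩V')→black] belongs to the class 𝒯. -/

import Mathlib

/-- `S` is a vertex cover of `G`: every edge has an endpoint in `S`. -/
def IsVertexCover {V : Type*} (G : SimpleGraph V) (S : Set V) : Prop :=
  ∀ ⦃u v : V⦄, G.Adj u v → u ∈ S ∨ v ∈ S

/-- `S` is a minimal vertex cover of `G`: no proper subset is a vertex cover. -/
def IsMinimalVertexCover {V : Type*} (G : SimpleGraph V) (S : Set V) : Prop :=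
  IsVertexCover G S ∧ ∀ T : Set V, T ⊂ S → ¬ IsVertexCover G T

/-- `S` is an independent set of `G`: pairwise non-adjacent vertices. -/
def IsIndepSet {V : Type*} (G : SimpleGraph V) (S : Set V) : Prop :=
  ∀ ⦃u v : V⦄, u ∈ S → v ∈ S → ¬ G.Adj u v

/-- `S` is a maximal independent set of `G`: no proper superset is independent. -/
def IsMaximalIndepSet {V : Type*} (G : SimpleGraph V) (S : Set V) : Prop :=
  IsIndepSet G S ∧ ∀ T : Set V, S ⊂ T → ¬ IsIndepSet G T

/-- `(G, U)` is a yes-instance of Ext VC: some minimal vertex cover contains `U`. -/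
def ExtVC {V : Type*} (G : SimpleGraph V) (U : Set V) : Prop :=
  ∃ S : Set V, U ⊆ S ∧ IsMinimalVertexCover G S

/-- `(G, U)` is a yes-instance of Ext IS: some maximal independent set is contained in `U`. -/
def ExtIS {V : Type*} (G : SimpleGraph V) (U : Set V) : Prop :=
  ∃ S : Set V, S ⊆ U ∧ IsMaximalIndepSet G S

/-- The closed neighborhood `N_G[U]` of a set `U` of vertices. -/
def closedNbhd {V : Type*} (G : SimpleGraph V) (U : Set V) : Set V :=
  U ∪ {v | ∃ u ∈ U, G.Adj u v}

/-- `S` is a dominating set of `G`: every vertex is in `S` or adjacent to a vertex of `S`. -/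
def IsDominating {V : Type*} (G : SimpleGraph V) (S : Set V) : Prop :=
  ∀ v : V, v ∈ S ∨ ∃ u ∈ S, G.Adj u v

/-- Membership in the inductively defined class `𝒯` of black-and-white trees, realized as
(induced sub)graphs of an ambient graph `G`: `BWTree G V' B` means that the subgraph of `G`
induced by the vertex set `V'`, with exactly the vertices of `B` colored black, belongs to `𝒯`.
Base case: a single black vertex. Step: add a new path `a − b − c` (three new vertices, with
`c` black and `a`, `b` white) and join `a` by an edge to a black vertex `x` of the old tree;
no other adjacencies between the new vertices and the old ones are allowed (so that the
induced subgraph on the enlarged vertex set is exactly the enlarged tree). -/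
inductive BWTree {V : Type*} (G : SimpleGraph V) : Set V → Set V → Prop
  | base (x : V) : BWTree G {x} {x}
  | step (V' B : Set V) (x a b c : V) :
      BWTree G V' B → x ∈ B →
      a ∉ V' → b ∉ V' → c ∉ V' → a ≠ b → a ≠ c → b ≠ c →
      G.Adj x a → G.Adj a b → G.Adj b c → ¬ G.Adj a c →
      (∀ y ∈ V', ∀ z : V, (z = a ∨ z = b ∨ z = c) → G.Adj y z → y = x ∧ z = a) →
      BWTree G (V' ∪ {a, b, c}) (B ∪ {c})


namespace S8
variable {V : Type*} {T : SimpleGraph V}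

lemma path_eq (hT : T.IsTree) {x y : V} {p q : T.Walk x y} (hp : p.IsPath) (hq : q.IsPath) :
    p = q := by
  obtain ⟨r, _, hr⟩ := hT.existsUnique_path x y
  rw [hr p hp, hr q hq]

lemma path_length (hT : T.IsTree) {x y : V} {p : T.Walk x y} (hp : p.IsPath) :
    p.length = T.dist x y := by
  obtain ⟨q, hq, hlen⟩ := hT.isConnected.exists_path_of_dist x y
  rw [path_eq hT hp hq, hlen]

lemma concat_path {x y a : V} {p : T.Walk x y} (hp : p.IsPath) (h : T.Adj y a)
    (ha : a ∉ p.support) : (p.concat h).IsPath := by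
  rw [SimpleGraph.Walk.isPath_def, SimpleGraph.Walk.support_concat]
  rw [SimpleGraph.Walk.isPath_def] at hp
  simp [List.nodup_append, hp, ha]
  exact fun b hb hba => ha (hba ▸ hb)

lemma dist_split (hT : T.IsTree) {x y w : V} {p : T.Walk x y} (hp : p.IsPath)
    (hw : w ∈ p.support) : T.dist x w + T.dist w y = T.dist x y := by
  classical
  have h1 := path_length hT (hp.takeUntil hw)
  have h2 := path_length hT (hp.dropUntil hw)
  have h3 := congrArg SimpleGraph.Walk.length (p.take_spec hw)
  rw [SimpleGraph.Walk.length_append, h1, h2] at h3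
  rw [← path_length hT hp]; exact h3

lemma dist_adj_cases (hT : T.IsTree) (r : V) {u a : V} (h : T.Adj u a) :
    T.dist r a = T.dist r u + 1 ∨ T.dist r u = T.dist r a + 1 := by
  obtain ⟨p, hp, hlen⟩ := hT.isConnected.exists_path_of_dist r u
  by_cases hmem : a ∈ p.support
  · right
    have h1 := dist_split hT hp hmem
    have hau : T.dist a u = 1 := SimpleGraph.dist_eq_one_iff_adj.mpr h.symm
    omega
  · left
    have hq : (p.concat h).IsPath := concat_path hp h hmem
    have h2 := path_length hT hq
    rw [SimpleGraph.Walk.length_concat, hlen] at h2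
    omega

lemma dist_zero (hT : T.IsTree) {x y : V} (h : T.dist x y = 0) : x = y :=
  (hT.isConnected.dist_eq_zero_iff.mp h)

-- the unique neighbor closer to r
lemma parent_unique (hT : T.IsTree) (r : V) {u y y' : V} (hy : T.Adj u y) (hy' : T.Adj u y')
    (h1 : T.dist r y + 1 = T.dist r u) (h2 : T.dist r y' + 1 = T.dist r u) : y = y' := by
  classical
  obtain ⟨p, hp, hlen⟩ := hT.isConnected.exists_path_of_dist r y
  obtain ⟨p', hp', hlen'⟩ := hT.isConnected.exists_path_of_dist r y'
  have hup : u ∉ p.support := by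
    intro hmem
    have := dist_split hT hp hmem
    have hpos : T.dist u y ≠ 0 := by
      intro h0; exact hy.ne (dist_zero hT h0)
    omega
  have hup' : u ∉ p'.support := by
    intro hmem
    have := dist_split hT hp' hmem
    have hpos : T.dist u y' ≠ 0 := by
      intro h0; exact hy'.ne (dist_zero hT h0)
    omega
  have hq : (p.concat hy.symm).IsPath := concat_path hp hy.symm hup
  have hq' : (p'.concat hy'.symm).IsPath := concat_path hp' hy'.symm hup'
  have heq := path_eq hT hq hq'
  have hrev := congrArg SimpleGraph.Walk.reverse heq
  rw [SimpleGraph.Walk.reverse_concat, SimpleGraph.Walk.reverse_concat] at hrev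
  have := congrArg (fun w => SimpleGraph.Walk.getVert w 1) hrev
  simpa [SimpleGraph.Walk.getVert_cons_succ] using this

lemma no_triangle (hT : T.IsTree) {x y z : V} (h1 : T.Adj x y) (h2 : T.Adj y z)
    (h3 : T.Adj x z) : False := by
  have hp1 : (SimpleGraph.Walk.cons h3 SimpleGraph.Walk.nil).IsPath := by
    simp [SimpleGraph.Walk.isPath_def, h3.ne]
  have hp2 : (SimpleGraph.Walk.cons h1 (SimpleGraph.Walk.cons h2 SimpleGraph.Walk.nil)).IsPath := by
    simp [SimpleGraph.Walk.isPath_def, h1.ne, h2.ne, h3.ne]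
  have := path_eq hT hp1 hp2
  have := congrArg SimpleGraph.Walk.length this
  simp at this


/-- The set of vertices strictly closer to `y` than to `x` (for an edge `x~y`,
this is the component of `y` in `T - xy`). -/
def Branch (T : SimpleGraph V) (x y : V) : Set V := {w | T.dist w y < T.dist w x}

lemma br_self (hT : T.IsTree) {x y : V} (h : T.Adj x y) : y ∈ Branch T x y := by
  have : T.dist y x = 1 := SimpleGraph.dist_eq_one_iff_adj.mpr h.symm
  simp [Branch, this]

lemma br_not_base {x y : V} : x ∉ Branch T x y := by
  simp [Branch, SimpleGraph.dist_self]

lemma br_mem_iff (hT : T.IsTree) {x y w : V} (h : T.Adj x y) :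
    w ∈ Branch T x y ↔ T.dist w y + 1 = T.dist w x := by
  constructor
  · intro hm
    simp only [Branch, Set.mem_setOf_eq] at hm
    rcases dist_adj_cases hT w h with hc | hc
    · omega
    · omega
  · intro hc; simp only [Branch, Set.mem_setOf_eq]; omega

lemma br_disjoint (hT : T.IsTree) {u y y' w : V} (hy : T.Adj u y) (hy' : T.Adj u y')
    (hw : w ∈ Branch T u y) (hw' : w ∈ Branch T u y') : y = y' := by
  rw [br_mem_iff hT hy] at hw
  rw [br_mem_iff hT hy'] at hw'
  exact parent_unique hT w hy hy' hw (by omega)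

lemma br_mono (hT : T.IsTree) {x y z : V} (hxy : T.Adj x y) (hyz : T.Adj y z)
    (hxz : x ≠ z) : Branch T y z ⊆ Branch T x y := by
  intro w hw
  rw [br_mem_iff hT hyz] at hw
  rw [br_mem_iff hT hxy]
  rcases dist_adj_cases hT w hxy with hc | hc
  · exfalso
    exact hxz (parent_unique hT w hxy.symm hyz (by omega) (by omega))
  · omega

lemma br_exit (hT : T.IsTree) {x y z z' : V} (hxy : T.Adj x y) (hz : z ∈ Branch T x y)
    (hz' : z' ∉ Branch T x y) (hadj : T.Adj z z') : z = y ∧ z' = x := by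
  rw [br_mem_iff hT hxy] at hz
  have hz'2 : T.dist z' y = T.dist z' x + 1 := by
    rcases dist_adj_cases hT z' hxy with hc | hc
    · exact hc
    · exfalso; apply hz'; rw [br_mem_iff hT hxy]; omega
  have cyz : T.dist y z = T.dist z y := SimpleGraph.dist_comm
  have cyz' : T.dist y z' = T.dist z' y := SimpleGraph.dist_comm
  have cxz : T.dist x z = T.dist z x := SimpleGraph.dist_comm
  have cxz' : T.dist x z' = T.dist z' x := SimpleGraph.dist_comm
  have hy' : T.dist z' y = T.dist z y + 1 := by
    rcases dist_adj_cases hT y hadj with hc | hc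
    · omega
    · exfalso
      rcases dist_adj_cases hT x hadj with hd | hd <;> omega
  have hx' : T.dist z' x + 1 = T.dist z x := by omega
  rcases Nat.eq_zero_or_pos (T.dist z y) with h0 | hpos
  · have hzy : z = y := dist_zero hT h0
    subst hzy
    have h1 : T.dist z' x = 0 := by omega
    exact ⟨rfl, dist_zero hT h1⟩
  · exfalso
    obtain ⟨p, hp, hlen⟩ := hT.isConnected.exists_path_of_dist z y
    have hne : z ≠ y := by
      intro h; subst h; simp [SimpleGraph.dist_self] at hpos
    obtain ⟨w₁, hzw, q, rfl⟩ := p.exists_eq_cons_of_ne hne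
    have hq : q.IsPath := hp.of_cons
    have hw1y : T.dist w₁ y + 1 = T.dist z y := by
      have := path_length hT hq
      simp only [SimpleGraph.Walk.length_cons] at hlen
      omega
    have hw1x_le : T.dist w₁ x ≤ T.dist z y := by
      calc T.dist w₁ x ≤ T.dist w₁ y + T.dist y x := hT.isConnected.dist_triangle
        _ = T.dist w₁ y + 1 := by rw [SimpleGraph.dist_eq_one_iff_adj.mpr hxy.symm]
        _ = T.dist z y := hw1y
    have hw1x_ge : T.dist z y ≤ T.dist w₁ x := by
      have h2 : T.dist z x ≤ T.dist z w₁ + T.dist w₁ x := hT.isConnected.dist_triangle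
      rw [SimpleGraph.dist_eq_one_iff_adj.mpr hzw] at h2
      omega
    have hw1x : T.dist w₁ x = T.dist z y := le_antisymm hw1x_le hw1x_ge
    have cw1 : T.dist x w₁ = T.dist w₁ x := SimpleGraph.dist_comm
    have hww : w₁ = z' := parent_unique hT x hzw hadj (by omega) (by omega)
    subst hww
    omega


/-- There is an independent set `D` avoiding `U` such that every vertex of `U`
has a neighbor in `D`. -/
def Sel (T : SimpleGraph V) (U : Set V) : Prop :=
  ∃ D : Set V, IsIndepSet T D ∧ (∀ v ∈ D, v ∉ U) ∧ ∀ u ∈ U, ∃ d ∈ D, T.Adj u d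

lemma sel_of_extVC {U : Set V} (h : ExtVC T U) : Sel T U := by
  obtain ⟨S, hUS, hVC, hmin⟩ := h
  refine ⟨Sᶜ, ?_, ?_, ?_⟩
  · intro u v hu hv hadj
    rcases hVC hadj with h | h
    · exact hu h
    · exact hv h
  · intro v hv hvU; exact hv (hUS hvU)
  · intro u hu
    have hss : S \ {u} ⊂ S := by
      apply Set.sdiff_singleton_ssubset.mpr (hUS hu)
    have := hmin _ hss
    rw [IsVertexCover] at this
    push_neg at this
    obtain ⟨v, w, hadj, hv, hw⟩ := this
    simp only [Set.mem_diff, Set.mem_singleton_iff, not_and, not_not] at hv hw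
    rcases hVC hadj with h | h
    · have hvu : v = u := hv h
      subst hvu
      refine ⟨w, ?_, hadj⟩
      intro hwS
      exact hadj.ne (hw hwS).symm
    · have hwu : w = u := hw h
      subst hwu
      refine ⟨v, ?_, hadj.symm⟩
      intro hvS
      exact hadj.ne (hv hvS)

lemma extVC_of_sel [Fintype V] {U : Set V} (h : Sel T U) : ExtVC T U := by
  classical
  obtain ⟨D, hDind, hDU, hDdom⟩ := h
  set 𝒮 : Set (Set V) := {E | D ⊆ E ∧ IsIndepSet T E ∧ ∀ v ∈ E, v ∉ U} with h𝒮
  have hfin : 𝒮.Finite := Set.toFinite _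
  have hne : 𝒮.Nonempty := ⟨D, subset_rfl, hDind, hDU⟩
  obtain ⟨E, hE, hEmax⟩ := Set.Finite.exists_maximalFor Set.ncard 𝒮 hfin hne
  obtain ⟨hDE, hEind, hEU⟩ := hE
  have key : ∀ v, v ∉ E → v ∉ U → ∃ d ∈ E, T.Adj v d := by
    intro v hvE hvU
    by_contra hno
    push_neg at hno
    have hins : insert v E ∈ 𝒮 := by
      refine ⟨hDE.trans (Set.subset_insert _ _), ?_, ?_⟩
      · intro x y hx hy hadj
        rcases Set.mem_insert_iff.mp hx with hx0 | hx0
        · rcases Set.mem_insert_iff.mp hy with hy0 | hy0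
          · exact hadj.ne (by rw [hx0, hy0])
          · exact hno y hy0 (hx0 ▸ hadj)
        · rcases Set.mem_insert_iff.mp hy with hy0 | hy0
          · exact hno x hx0 (hy0 ▸ hadj.symm)
          · exact hEind hx0 hy0 hadj
      · intro x hx
        rcases Set.mem_insert_iff.mp hx with rfl | hx
        · exact hvU
        · exact hEU x hx
    have hcard := hEmax hins (by
      have : E.ncard ≤ (insert v E).ncard := Set.ncard_le_ncard (Set.subset_insert _ _) (Set.toFinite _)
      exact this)
    rw [Set.ncard_insert_of_notMem hvE (Set.toFinite _)] at hcard
    omega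
  refine ⟨Eᶜ, ?_, ?_, ?_⟩
  · intro u hu
    by_contra hc
    simp only [Set.mem_compl_iff, not_not] at hc
    exact hEU u hc hu
  · intro u v hadj
    by_contra hc
    push_neg at hc
    simp only [Set.mem_compl_iff, not_not] at hc
    exact hEind hc.1 hc.2 hadj
  · intro T' hss hVC'
    obtain ⟨v, hvS, hvT'⟩ := Set.exists_of_ssubset hss
    have hvE : v ∉ E := hvS
    have hd : ∃ d ∈ E, T.Adj v d := by
      by_cases hvU : v ∈ U
      · obtain ⟨d, hdD, hadj⟩ := hDdom v hvU
        exact ⟨d, hDE hdD, hadj⟩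
      · exact key v hvE hvU
    obtain ⟨d, hdE, hadj⟩ := hd
    rcases hVC' hadj with h | h
    · exact hvT' h
    · exact (hss.subset h) hdE


lemma bw_subset {V' B : Set V} (h : BWTree T V' B) : B ⊆ V' := by
  induction h with
  | base x => exact subset_rfl
  | step V' B x a b c _ _ _ _ _ _ _ _ _ _ _ _ _ ih =>
    intro w hw
    rcases hw with hw | hw
    · exact Set.mem_union_left _ (ih hw)
    · exact Set.mem_union_right _ (by simp [hw])

lemma bw_sound {V' B : Set V} (h : BWTree T V' B) (D : Set V) (hD : IsIndepSet T D)
    (hBD : ∀ x ∈ B, x ∉ D) (hdom : ∀ u ∈ B, ∃ d, d ∈ D ∧ d ∈ V' ∧ T.Adj u d) : False := by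
  induction h with
  | base x =>
    obtain ⟨d, _, hdV, hadj⟩ := hdom x rfl
    rw [Set.mem_singleton_iff] at hdV
    exact hadj.ne hdV.symm
  | step V' B x a b c hbw hxB haV hbV hcV hab hac hbc hxa hab2 hbc2 hnac hatt ih =>
    -- first: b ∈ D via the requirement of c
    obtain ⟨d, hdD, hdV, hadj⟩ := hdom c (Set.mem_union_right _ rfl)
    have hdb : d = b := by
      rcases hdV with hdV | hdV
      · exact absurd ((hatt d hdV c (by tauto) hadj.symm).2) (Ne.symm hac)
      · rcases hdV with rfl | rfl | rfl
        · exact absurd hadj.symm hnac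
        · rfl
        · exact absurd rfl hadj.ne'
    subst hdb
    -- now apply ih
    apply ih
    · intro w hw; exact hBD w (Set.mem_union_left _ hw)
    · intro u hu
      obtain ⟨e, heD, heV, headj⟩ := hdom u (Set.mem_union_left _ hu)
      have huV : u ∈ V' := bw_subset hbw hu
      rcases heV with heV | heV
      · exact ⟨e, heD, heV, headj⟩
      · exfalso
        have := hatt u huV e (by tauto) headj
        rcases this with ⟨rfl, rfl⟩
        exact hD heD hdD hab2


lemma induce_adj_of {s : Set V} {x y : V} (hx : x ∈ s) (hy : y ∈ s) (h : T.Adj x y) :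
    (T.induce s).Adj ⟨x, hx⟩ ⟨y, hy⟩ := by
  simp [h]

lemma bw_connected {V' B : Set V} (h : BWTree T V' B) : (T.induce V').Connected := by
  induction h with
  | base x =>
    have : Nonempty (({x} : Set V) : Set V) := ⟨⟨x, rfl⟩⟩
    constructor
    intro u v
    have hu : u = v := Subtype.ext (by rw [u.2, v.2])
    exact hu ▸ SimpleGraph.Reachable.refl u
  | step V' B x a b c hbw hxB haV hbV hcV hab hac hbc hxa hab2 hbc2 hnac hatt ih =>
    have hxV : x ∈ V' := bw_subset hbw hxB
    set t : Set V := V' ∪ {a, b, c} with ht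
    have hsub : V' ≤ t := Set.subset_union_left
    have hxt : x ∈ t := Set.mem_union_left _ hxV
    have hat : a ∈ t := Set.mem_union_right _ (by simp)
    have hbt : b ∈ t := Set.mem_union_right _ (by simp)
    have hct : c ∈ t := Set.mem_union_right _ (by simp)
    have key : ∀ (wv : V) (hw : wv ∈ t), (T.induce t).Reachable ⟨wv, hw⟩ ⟨x, hxt⟩ := by
      intro wv hw
      have rax : (T.induce t).Reachable ⟨a, hat⟩ ⟨x, hxt⟩ :=
        (induce_adj_of hat hxt hxa.symm).reachable
      have rba : (T.induce t).Reachable ⟨b, hbt⟩ ⟨a, hat⟩ :=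
        (induce_adj_of hbt hat hab2.symm).reachable
      have rcb : (T.induce t).Reachable ⟨c, hct⟩ ⟨b, hbt⟩ :=
        (induce_adj_of hct hbt hbc2.symm).reachable
      rcases hw with hw | hw
      · have hreach := ih.preconnected ⟨wv, hw⟩ ⟨x, hxV⟩
        have := hreach.map (T.induceHomOfLE hsub).toHom
        exact this
      · rcases hw with rfl | rfl | rfl
        · exact rax
        · exact rba.trans rax
        · exact rcb.trans (rba.trans rax)
    haveI : Nonempty t := ⟨⟨x, hxt⟩⟩
    exact ⟨fun u v => ((key u.1 u.2).trans (key v.1 v.2).symm : _)⟩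

set_option maxHeartbeats 1000000 in
lemma bw_merge {V2 B2 : Set V} (h2 : BWTree T V2 B2) :
    ∀ (V1 B1 : Set V) (x y a b : V),
    BWTree T V1 B1 →
    x ∈ B1 → y ∈ B2 →
    T.Adj x a → T.Adj a b → T.Adj b y → ¬ T.Adj a y →
    a ∉ V1 → a ∉ V2 → b ∉ V1 → b ∉ V2 → a ≠ b →
    (∀ z ∈ V1, z ∉ V2) →
    (∀ z ∈ V1, ∀ z' ∈ V2, ¬ T.Adj z z') →
    (∀ z ∈ V1, ∀ w, (w = a ∨ w = b) → T.Adj z w → z = x ∧ w = a) →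
    (∀ z ∈ V2, ∀ w, (w = a ∨ w = b) → T.Adj z w → z = y ∧ w = b) →
    BWTree T (V1 ∪ ({a, b} ∪ V2)) (B1 ∪ B2) := by
  induction h2 with
  | base y0 =>
    intro V1 B1 x y a b h1 hx hy hxa hab hby hay haV1 haV2 hbV1 hbV2 hne hdisj hcross h1ab h2ab
    rw [Set.mem_singleton_iff] at hy
    subst hy
    have hstep := BWTree.step V1 B1 x a b y h1 hx haV1 hbV1
      (fun hyV1 => hdisj y hyV1 rfl) hne
      (fun h => haV2 (h ▸ rfl)) (fun h => hbV2 (h ▸ rfl))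
      hxa hab hby hay
      (by
        intro z hz w hw hadj
        rcases hw with hw | hw | hw
        · exact h1ab z hz w (Or.inl hw) hadj
        · exact h1ab z hz w (Or.inr hw) hadj
        · exact absurd hadj (hw ▸ hcross z hz y rfl))
    have hset : V1 ∪ {a, b, y} = V1 ∪ ({a, b} ∪ {y}) := by
      ext z; simp only [Set.mem_union, Set.mem_insert_iff, Set.mem_singleton_iff]; tauto
    have hset2 : B1 ∪ {y} = B1 ∪ ({y} : Set V) := rfl
    rw [hset] at hstep
    exact hstep
  | step V2' B2' x₂ a' b' c' hbw' hx2 haV2' hbV2' hcV2' hab' hac' hbc' hxa' hab2' hbc2' hnac' hatt' ih =>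
    intro V1 B1 x y a b h1 hx hy hxa hab hby hay haV1 haV2 hbV1 hbV2 hne hdisj hcross h1ab h2ab
    have ha'V2 : a' ∈ V2' ∪ {a', b', c'} := Set.mem_union_right _ (by simp)
    have hb'V2 : b' ∈ V2' ∪ {a', b', c'} := Set.mem_union_right _ (by simp)
    have hc'V2 : c' ∈ V2' ∪ {a', b', c'} := Set.mem_union_right _ (by simp)
    have hsub' : V2' ⊆ V2' ∪ {a', b', c'} := Set.subset_union_left
    have hx2V : x₂ ∈ V2' := bw_subset hbw' hx2
    rcases hy with hy | hy
    · -- y ∈ B2'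
      have hbase := ih V1 B1 x y a b h1 hx hy hxa hab hby hay haV1
        (fun h => haV2 (hsub' h)) hbV1 (fun h => hbV2 (hsub' h)) hne
        (fun z hz h => hdisj z hz (hsub' h))
        (fun z hz z' hz' => hcross z hz z' (hsub' hz'))
        h1ab
        (fun z hz w hw hadj => h2ab z (hsub' hz) w hw hadj)
      have hyV2' : y ∈ V2' := bw_subset hbw' hy
      have hstep := BWTree.step _ _ x₂ a' b' c' hbase (Or.inr hx2)
        (by
          intro hmem
          rcases hmem with hmem | hmem
          · exact hdisj a' hmem ha'V2
          · rcases hmem with hmem | hmem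
            · rcases hmem with rfl | rfl
              · exact haV2 ha'V2
              · exact hbV2 ha'V2
            · exact haV2' hmem)
        (by
          intro hmem
          rcases hmem with hmem | hmem
          · exact hdisj b' hmem hb'V2
          · rcases hmem with hmem | hmem
            · rcases hmem with rfl | rfl
              · exact haV2 hb'V2
              · exact hbV2 hb'V2
            · exact hbV2' hmem)
        (by
          intro hmem
          rcases hmem with hmem | hmem
          · exact hdisj c' hmem hc'V2
          · rcases hmem with hmem | hmem
            · rcases hmem with rfl | rfl
              · exact haV2 hc'V2
              · exact hbV2 hc'V2
            · exact hcV2' hmem)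
        hab' hac' hbc' hxa' hab2' hbc2' hnac'
        (by
          intro z hz w hw hadj
          have hwV2 : w ∈ V2' ∪ {a', b', c'} := by
            rcases hw with rfl | rfl | rfl
            exacts [ha'V2, hb'V2, hc'V2]
          rcases hz with hz | hz
          · exact absurd hadj (hcross z hz w hwV2)
          · rcases hz with hz | hz
            · exfalso
              rcases hz with rfl | rfl
              · -- z = a
                have := h2ab w hwV2 z (Or.inl rfl) hadj.symm
                rcases this with ⟨hw1, hw2⟩
                exact hne hw2
              · -- z = b
                have h9 := h2ab w hwV2 z (Or.inr rfl) hadj.symm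
                rcases hw with rfl | rfl | rfl
                · exact haV2' (h9.1.symm ▸ hyV2')
                · exact hbV2' (h9.1.symm ▸ hyV2')
                · exact hcV2' (h9.1.symm ▸ hyV2')
            · exact hatt' z hz w hw hadj)
      have hset : V1 ∪ ({a, b} ∪ V2') ∪ {a', b', c'} = V1 ∪ ({a, b} ∪ (V2' ∪ {a', b', c'})) := by
        ext z; simp only [Set.mem_union, Set.mem_insert_iff, Set.mem_singleton_iff]; tauto
      have hset2 : B1 ∪ B2' ∪ {c'} = B1 ∪ (B2' ∪ {c'}) := by
        ext z; simp only [Set.mem_union, Set.mem_insert_iff, Set.mem_singleton_iff]; tauto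
      rw [hset, hset2] at hstep
      exact hstep
    · -- y = c'
      rw [Set.mem_singleton_iff] at hy
      rw [hy] at hby hay
      have h2ab' : ∀ z ∈ V2' ∪ {a', b', c'}, ∀ w, (w = a ∨ w = b) → T.Adj z w → z = c' ∧ w = b := by
        intro z hz w hw hadj
        have h9 := h2ab z hz w hw hadj
        exact ⟨hy ▸ h9.1, h9.2⟩
      -- attach (a,b,c') to V1 first
      have hstep1 := BWTree.step V1 B1 x a b c' h1 hx haV1 hbV1
        (fun h => hdisj c' h hc'V2) hne (fun h => haV2 (h ▸ hc'V2)) (fun h => hbV2 (h ▸ hc'V2))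
        hxa hab hby hay
        (by
          intro z hz w hw hadj
          rcases hw with hw | hw | hw
          · exact h1ab z hz w (Or.inl hw) hadj
          · exact h1ab z hz w (Or.inr hw) hadj
          · exact absurd hadj (hw ▸ hcross z hz c' hc'V2))
      -- now merge (V1 ∪ {a,b,c'}) with V2' along path c' - b' - a' - x₂
      have hres := ih (V1 ∪ {a, b, c'}) (B1 ∪ {c'}) c' x₂ b' a' hstep1 (Or.inr rfl) hx2
        hbc2'.symm hab2'.symm hxa'.symm
        (by
          intro hadj
          have h9 := hatt' x₂ hx2V b' (Or.inr (Or.inl rfl)) hadj.symm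
          exact hab' h9.2.symm)
        (by
          -- b' ∉ V1 ∪ {a,b,c'}
          intro hmem
          rcases hmem with hmem | hmem
          · exact hdisj b' hmem hb'V2
          · rcases hmem with rfl | rfl | rfl
            · exact haV2 hb'V2
            · exact hbV2 hb'V2
            · exact hbc' rfl)
        hbV2'
        (by
          intro hmem
          rcases hmem with hmem | hmem
          · exact hdisj a' hmem ha'V2
          · rcases hmem with rfl | rfl | rfl
            · exact haV2 ha'V2
            · exact hbV2 ha'V2
            · exact hac' rfl)
        haV2'
        (Ne.symm hab')
        (by
          intro z hz hzV2'
          rcases hz with hz | hz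
          · exact hdisj z hz (hsub' hzV2')
          · rcases hz with rfl | rfl | rfl
            · exact haV2 (hsub' hzV2')
            · exact hbV2 (hsub' hzV2')
            · exact hcV2' hzV2')
        (by
          intro z hz z' hz' hadj
          rcases hz with hz | hz
          · exact hcross z hz z' (hsub' hz') hadj
          · rcases hz with rfl | rfl | rfl
            · have h9 := h2ab' z' (hsub' hz') z (Or.inl rfl) hadj.symm
              exact hcV2' (h9.1 ▸ hz')
            · have h9 := h2ab' z' (hsub' hz') z (Or.inr rfl) hadj.symm
              exact hcV2' (h9.1 ▸ hz')
            · have h9 := hatt' z' hz' z (Or.inr (Or.inr rfl)) hadj.symm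
              exact hac' (h9.2 ▸ rfl))
        (by
          -- z ∈ V1∪{a,b,c'}, w ∈ {b', a'} → z = c' ∧ w = b'
          intro z hz w hw hadj
          have hwV2 : w ∈ V2' ∪ {a', b', c'} := by
            rcases hw with rfl | rfl
            exacts [hb'V2, ha'V2]
          rcases hz with hz | hz
          · exact absurd hadj (hcross z hz w hwV2)
          · rcases hz with rfl | rfl | rfl
            · exfalso
              have h9 := h2ab' w hwV2 z (Or.inl rfl) hadj.symm
              exact hne h9.2
            · exfalso
              have h9 := h2ab' w hwV2 z (Or.inr rfl) hadj.symm
              rcases hw with rfl | rfl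
              · exact hbc' h9.1
              · exact hac' h9.1
            · -- z = c'
              rcases hw with rfl | rfl
              · exact ⟨rfl, rfl⟩
              · exact absurd hadj.symm hnac')
        (by
          intro z hz w hw hadj
          rcases hw with rfl | rfl
          · exact hatt' z hz w (Or.inr (Or.inl rfl)) hadj
          · exact hatt' z hz w (Or.inl rfl) hadj)
      have hset : V1 ∪ {a, b, c'} ∪ ({b', a'} ∪ V2') = V1 ∪ ({a, b} ∪ (V2' ∪ {a', b', c'})) := by
        ext z; simp only [Set.mem_union, Set.mem_insert_iff, Set.mem_singleton_iff]; tauto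
      have hset2 : B1 ∪ {c'} ∪ B2' = B1 ∪ (B2' ∪ {c'}) := by
        ext z; simp only [Set.mem_union, Set.mem_insert_iff, Set.mem_singleton_iff]; tauto
      rw [hset, hset2] at hres
      exact hres

end S8

/-- `Forced G U u b`: in any admissible selection, vertex `u ∈ U` must use `b`. -/
inductive S8Forced {V : Type*} (G : SimpleGraph V) (U : Set V) : V → V → Prop
  | mk (u b : V) (f g : V → V) :
      u ∈ U → G.Adj u b →
      (∀ a, G.Adj u a → a ≠ b → G.Adj a (f a)) →
      (∀ a, G.Adj u a → a ≠ b → f a ≠ u) →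
      (∀ a, G.Adj u a → a ≠ b → G.Adj (f a) (g a)) →
      (∀ a, G.Adj u a → a ≠ b → g a ∈ U) →
      (∀ a, G.Adj u a → a ≠ b → S8Forced G U (g a) (f a)) →
      S8Forced G U u b

/-- `Blocked G U u a`: vertex `u` cannot use its neighbor `a`. -/
def S8Blocked {V : Type*} (G : SimpleGraph V) (U : Set V) (u a : V) : Prop :=
  ∃ b' u', G.Adj a b' ∧ b' ≠ u ∧ G.Adj b' u' ∧ u' ∈ U ∧ S8Forced G U u' b'

def S8AllBlocked {V : Type*} (G : SimpleGraph V) (U : Set V) (u : V) : Prop :=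
  u ∈ U ∧ ∀ a, G.Adj u a → S8Blocked G U u a

namespace S8
variable {V : Type*} {T : SimpleGraph V}

lemma forced_mem {U : Set V} {u b : V} (h : S8Forced T U u b) : u ∈ U ∧ T.Adj u b := by
  cases h with
  | mk u b f g h1 h2 h3 h4 h5 h6 h7 => exact ⟨h1, h2⟩

lemma forced_blocked {U : Set V} {u b : V} (h : S8Forced T U u b) :
    ∀ a, T.Adj u a → a ≠ b → S8Blocked T U u a := by
  cases h with
  | mk u b f g h1 h2 h3 h4 h5 h6 h7 =>
    intro a ha hne
    exact ⟨f a, g a, h3 a ha hne, h4 a ha hne, h5 a ha hne, h6 a ha hne, h7 a ha hne⟩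

lemma forced_of_blocked {U : Set V} {u b : V} (hu : u ∈ U) (hb : T.Adj u b)
    (h : ∀ a, T.Adj u a → a ≠ b → S8Blocked T U u a) : S8Forced T U u b := by
  classical
  have hex : ∀ a : V, ∃ p : V × V, T.Adj u a → a ≠ b →
      T.Adj a p.1 ∧ p.1 ≠ u ∧ T.Adj p.1 p.2 ∧ p.2 ∈ U ∧ S8Forced T U p.2 p.1 := by
    intro a
    by_cases hc : T.Adj u a ∧ a ≠ b
    · obtain ⟨b', u', h1, h2, h3, h4, h5⟩ := h a hc.1 hc.2
      exact ⟨(b', u'), fun _ _ => ⟨h1, h2, h3, h4, h5⟩⟩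
    · exact ⟨(u, u), fun h1 h2 => absurd ⟨h1, h2⟩ hc⟩
  choose p hp using hex
  exact S8Forced.mk u b (fun a => (p a).1) (fun a => (p a).2) hu hb
    (fun a ha hne => (hp a ha hne).1) (fun a ha hne => (hp a ha hne).2.1)
    (fun a ha hne => (hp a ha hne).2.2.1) (fun a ha hne => (hp a ha hne).2.2.2.1)
    (fun a ha hne => (hp a ha hne).2.2.2.2)

lemma not_mem_U_of_adj {U : Set V} (hU : IsIndepSet T U) {u v : V} (hu : u ∈ U)
    (h : T.Adj u v) : v ∉ U :=
  fun hv => hU hu hv h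

lemma sel_of_no_allblocked (hT : T.IsTree) {U : Set V} (hU : IsIndepSet T U)
    (h : ∀ u, ¬ S8AllBlocked T U u) : Sel T U := by
  haveI : Nonempty V := hT.isConnected.nonempty
  obtain ⟨r⟩ := ‹Nonempty V›
  refine ⟨{v | ∃ u ∈ U, S8Forced T U u v ∨
      (T.Adj u v ∧ ¬ S8Blocked T U u v ∧ T.dist r v = T.dist r u + 1 ∧
        ¬ ∃ b, S8Forced T U u b)}, ?_, ?_, ?_⟩
  · -- independence
    rintro v w ⟨u, hu, hv⟩ ⟨u', hu', hw⟩ hadj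
    have hvU : v ∉ U := by
      rcases hv with hv | hv
      · exact not_mem_U_of_adj hU hu (forced_mem hv).2
      · exact not_mem_U_of_adj hU hu hv.1
    have hwU : w ∉ U := by
      rcases hw with hw | hw
      · exact not_mem_U_of_adj hU hu' (forced_mem hw).2
      · exact not_mem_U_of_adj hU hu' hw.1
    rcases hv with hv | hv
    · rcases hw with hw | hw
      · -- both forced
        have hbl : S8Blocked T U u v :=
          ⟨w, u', hadj, fun he => hwU (he ▸ hu), (forced_mem hw).2.symm, hu', hw⟩
        apply h u
        refine ⟨hu, fun a ha => ?_⟩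
        by_cases hne : a = v
        · exact hne ▸ hbl
        · exact forced_blocked hv a ha hne
      · -- v forced, w free
        exact hw.2.1 ⟨v, u, hadj.symm, fun he => hvU (he ▸ hu'), (forced_mem hv).2.symm, hu, hv⟩
    · rcases hw with hw | hw
      · -- w forced, v free
        exact hv.2.1 ⟨w, u', hadj, fun he => hwU (he ▸ hu), (forced_mem hw).2.symm, hu', hw⟩
      · -- both free
        rcases dist_adj_cases hT r hadj with hc | hc
        · have : v = u' := parent_unique hT r hadj.symm hw.1.symm
            (by omega) (by omega)
          exact hvU (this ▸ hu')
        · have : w = u := parent_unique hT r hadj hv.1.symm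
            (by omega) (by omega)
          exact hwU (this ▸ hu)
  · -- avoids U
    rintro v ⟨u, hu, hv⟩
    rcases hv with hv | hv
    · exact not_mem_U_of_adj hU hu (forced_mem hv).2
    · exact not_mem_U_of_adj hU hu hv.1
  · -- domination
    intro u hu
    by_cases hf : ∃ b, S8Forced T U u b
    · obtain ⟨b, hb⟩ := hf
      exact ⟨b, ⟨u, hu, Or.inl hb⟩, (forced_mem hb).2⟩
    · have hnab := h u
      rw [S8AllBlocked] at hnab
      push_neg at hnab
      obtain ⟨a₀, ha₀, hnb₀⟩ := hnab hu
      have hnf : ¬ S8Forced T U u a₀ := fun hf' => hf ⟨a₀, hf'⟩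
      have h2 : ∃ a₁, T.Adj u a₁ ∧ a₁ ≠ a₀ ∧ ¬ S8Blocked T U u a₁ := by
        by_contra hc
        push_neg at hc
        exact hnf (forced_of_blocked hu ha₀ (fun a ha hne => hc a ha hne))
      obtain ⟨a₁, ha₁, hne₁, hnb₁⟩ := h2
      rcases dist_adj_cases hT r ha₀ with hc | hc
      · exact ⟨a₀, ⟨u, hu, Or.inr ⟨ha₀, hnb₀, hc, hf⟩⟩, ha₀⟩
      · rcases dist_adj_cases hT r ha₁ with hc' | hc'
        · exact ⟨a₁, ⟨u, hu, Or.inr ⟨ha₁, hnb₁, hc', hf⟩⟩, ha₁⟩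
        · exact absurd (parent_unique hT r ha₁ ha₀ (by omega) (by omega)) hne₁


lemma br_opp {x y z : V} (h : z ∈ Branch T x y) : z ∉ Branch T y x := by
  simp only [Branch, Set.mem_setOf_eq] at *
  omega

lemma dist_two (hT : T.IsTree) {x y z : V} (hne : x ≠ y) (hnadj : ¬ T.Adj x y)
    (h1 : T.Adj x z) (h2 : T.Adj z y) : T.dist x y = 2 := by
  have hle : T.dist x y ≤ 2 := by
    have := T.dist_le (SimpleGraph.Walk.cons h1 (SimpleGraph.Walk.cons h2 SimpleGraph.Walk.nil))
    simpa using this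
  have h0 : T.dist x y ≠ 0 := by
    intro h
    exact hne (dist_zero hT h)
  have h1' : T.dist x y ≠ 1 := by
    intro h
    exact hnadj (SimpleGraph.dist_eq_one_iff_adj.mp h)
  omega

lemma two_step_branch (hT : T.IsTree) {u a b' : V} (h1 : T.Adj u a) (h2 : T.Adj a b')
    (hne : b' ≠ u) : b' ∈ Branch T u a := by
  rw [br_mem_iff hT h1]
  have d1 : T.dist b' a = 1 := SimpleGraph.dist_eq_one_iff_adj.mpr h2.symm
  have d2 : T.dist b' u = 2 :=
    dist_two hT hne (fun h => no_triangle hT h1 h2 h.symm) h2.symm h1.symm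
  omega

/-- A partial obstruction hanging off `u` away from `b`. -/
def HangP (T : SimpleGraph V) (U : Set V) (u b : V) : Prop :=
  ∃ V' B : Set V, BWTree T V' B ∧ B = U ∩ V' ∧ u ∈ B ∧
    (∀ z ∈ V', z ∈ Branch T b u) ∧
    (∀ w ∈ B, w ≠ u → ∀ z, T.Adj w z → z ∈ V') ∧
    (∀ a, T.Adj u a → a ≠ b → a ∈ V')

lemma hang_accum (hT : T.IsTree) {U : Set V} (hU : IsIndepSet T U) {u : V} (hu : u ∈ U)
    (s : Finset V) (hadj : ∀ a ∈ s, T.Adj u a)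
    (hw : ∀ a ∈ s, ∃ b' u', T.Adj a b' ∧ b' ≠ u ∧ T.Adj b' u' ∧ u' ∈ U ∧ HangP T U u' b') :
    ∃ C BC : Set V, BWTree T C BC ∧ BC = U ∩ C ∧ u ∈ BC ∧
      (∀ z ∈ C, z = u ∨ ∃ a ∈ s, z ∈ Branch T u a) ∧
      (∀ w ∈ BC, w ≠ u → ∀ z, T.Adj w z → z ∈ C) ∧
      (∀ a ∈ s, a ∈ C) := by
  classical
  induction s using Finset.induction with
  | empty =>
    refine ⟨{u}, {u}, BWTree.base u, ?_, rfl, ?_, ?_, ?_⟩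
    · ext z
      simp only [Set.mem_inter_iff, Set.mem_singleton_iff]
      constructor
      · rintro rfl; exact ⟨hu, rfl⟩
      · tauto
    · intro z hz
      rw [Set.mem_singleton_iff] at hz
      exact Or.inl hz
    · intro w hwB hwu
      exact absurd (Set.mem_singleton_iff.mp hwB) hwu
    · intro a ha; exact absurd ha (Finset.notMem_empty a)
  | @insert a' s ha's ih =>
    obtain ⟨C, BC, hbwC, hBC, huBC, hinv, hfullC, hsC⟩ := ih
      (fun a ha => hadj a (Finset.mem_insert_of_mem ha))
      (fun a ha => hw a (Finset.mem_insert_of_mem ha))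
    obtain ⟨b', u', hab', hb'u, hb'u', hu'U, V₂, B₂, hbw₂, hB₂, hu'B₂, hbr₂, hfull₂, hnb₂⟩ :=
      hw a' (Finset.mem_insert_self a' s)
    have hua' : T.Adj u a' := hadj a' (Finset.mem_insert_self a' s)
    have ha'U : a' ∉ U := not_mem_U_of_adj hU hu hua'
    have hb'U : b' ∉ U := not_mem_U_of_adj hU hu'U hb'u'.symm
    have ha'br : a' ∈ Branch T u a' := br_self hT hua'
    have hb'br : b' ∈ Branch T u a' := two_step_branch hT hua' hab' hb'u
    have hu'ne : u' ≠ a' := by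
      rintro rfl; exact ha'U hu'U
    have hnadj_u'a' : ¬ T.Adj a' u' := fun h => no_triangle hT hab' hb'u' h
    have hu'br : u' ∈ Branch T u a' :=
      br_mono hT hua' hab' (fun h => hb'u h.symm) (two_step_branch hT hab' hb'u' hu'ne)

    have hV₂br : ∀ z ∈ V₂, z ∈ Branch T u a' := by
      intro z hz
      exact br_mono hT hua' hab' (fun h => hb'u h.symm)
        (br_mono hT hab' hb'u' (fun h => hu'ne h.symm) (hbr₂ z hz))
    -- members of Branch T u a' are not in C
    have hCbr : ∀ z ∈ C, z ∉ Branch T u a' := by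
      intro z hz hzbr
      rcases hinv z hz with rfl | ⟨a, has, hzbr'⟩
      · exact br_not_base hzbr
      · have : a = a' := br_disjoint hT (hadj a (Finset.mem_insert_of_mem has)) hua' hzbr' hzbr
        exact ha's (this ▸ has)
    have ha'V₂ : a' ∉ V₂ := by
      intro h
      have := hbr₂ a' h
      rw [br_mem_iff hT hb'u'] at this
      have d1 : T.dist a' b' = 1 := SimpleGraph.dist_eq_one_iff_adj.mpr hab'
      have : a' = u' := dist_zero hT (by omega)
      exact hu'ne this.symm
    have hb'V₂ : b' ∉ V₂ := by
      intro h
      have := hbr₂ b' h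
      rw [br_mem_iff hT hb'u'] at this
      simp [SimpleGraph.dist_self] at this
    have huV₂ : u ∉ V₂ := fun h => br_not_base (hV₂br u h)
    have hmerge := bw_merge hbw₂ C BC u u' a' b' hbwC huBC hu'B₂ hua' hab' hb'u'
      hnadj_u'a'
      (fun h => hCbr a' h ha'br) ha'V₂ (fun h => hCbr b' h hb'br) hb'V₂ hab'.ne
      (fun z hz h => hCbr z hz (hV₂br z h))
      (by
        intro z hz z' hz' hadj'
        have hz'br : z' ∈ Branch T u a' := hV₂br z' hz'
        have := br_exit hT hua' hz'br (hCbr z hz) hadj'.symm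
        exact ha'V₂ (this.1 ▸ hz'))
      (by
        intro z hz w hw hadj'
        have hwbr : w ∈ Branch T u a' := by
          rcases hw with rfl | rfl
          exacts [ha'br, hb'br]
        have := br_exit hT hua' hwbr (hCbr z hz) hadj'.symm
        refine ⟨this.2, ?_⟩
        rcases hw with rfl | rfl
        · rfl
        · exfalso
          -- w = b' and z = u, i.e. Adj u b' : triangle
          have hzu : z = u := this.2
          exact no_triangle hT hua' hab' (hzu ▸ hadj')
      )
      (by
        intro z hz w hw hadj'
        have hwn : w ∉ Branch T b' u' := by
          intro h
          rw [br_mem_iff hT hb'u'] at h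
          rcases hw with h9 | h9 <;> rw [h9] at h
          · have d1 : T.dist a' b' = 1 := SimpleGraph.dist_eq_one_iff_adj.mpr hab'
            exact hu'ne (dist_zero hT (by omega)).symm
          · simp [SimpleGraph.dist_self] at h
        exact br_exit hT hb'u' (hbr₂ z hz) hwn hadj')
    refine ⟨C ∪ ({a', b'} ∪ V₂), BC ∪ B₂, hmerge, ?_, Or.inl huBC, ?_, ?_, ?_⟩
    · rw [hBC, hB₂]
      ext z
      simp only [Set.mem_union, Set.mem_inter_iff, Set.mem_insert_iff, Set.mem_singleton_iff]
      constructor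
      · rintro (⟨h1, h2⟩ | ⟨h1, h2⟩)
        · exact ⟨h1, Or.inl h2⟩
        · exact ⟨h1, Or.inr (Or.inr h2)⟩
      · rintro ⟨h1, h2 | h2 | h2⟩
        · exact Or.inl ⟨h1, h2⟩
        · exfalso
          rcases h2 with rfl | rfl
          exacts [ha'U h1, hb'U h1]
        · exact Or.inr ⟨h1, h2⟩
    · intro z hz
      rcases hz with hz | hz
      · rcases hinv z hz with rfl | ⟨a, has, hbr⟩
        · exact Or.inl rfl
        · exact Or.inr ⟨a, Finset.mem_insert_of_mem has, hbr⟩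
      · refine Or.inr ⟨a', Finset.mem_insert_self a' s, ?_⟩
        rcases hz with hz | hz
        · rcases hz with rfl | rfl
          exacts [ha'br, hb'br]
        · exact hV₂br z hz
    · intro w hwB hwu z hadj'
      rcases hwB with hwB | hwB
      · exact Or.inl (hfullC w hwB hwu z hadj')
      · have hwu' : w ≠ u ∨ True := Or.inr trivial
        by_cases hcase : w = u'
        · subst hcase
          by_cases hzb : z = b'
          · exact Or.inr (Set.mem_union_left _ (by simp [hzb]))
          · exact Or.inr (Set.mem_union_right _ (hnb₂ z hadj' hzb))
        · exact Or.inr (Set.mem_union_right _ (hfull₂ w hwB hcase z hadj'))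
    · intro a ha
      rcases Finset.mem_insert.mp ha with rfl | ha
      · exact Or.inr (Set.mem_union_left _ (by simp))
      · exact Or.inl (hsC a ha)


lemma forced_hang [Fintype V] (hT : T.IsTree) {U : Set V} (hU : IsIndepSet T U) {u b : V}
    (hF : S8Forced T U u b) : HangP T U u b := by
  classical
  induction hF with
  | mk u b f g h1 h2 h3 h4 h5 h6 h7 ih =>
    set s : Finset V := (Set.toFinite {a | T.Adj u a ∧ a ≠ b}).toFinset with hs
    have hmem : ∀ a, a ∈ s ↔ (T.Adj u a ∧ a ≠ b) := by
      intro a; simp [hs, Set.Finite.mem_toFinset]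
    obtain ⟨C, BC, hbwC, hBC, huBC, hinv, hfullC, hsC⟩ := hang_accum hT hU h1 s
      (fun a ha => ((hmem a).mp ha).1)
      (fun a ha => by
        obtain ⟨ha1, ha2⟩ := (hmem a).mp ha
        exact ⟨f a, g a, h3 a ha1 ha2, h4 a ha1 ha2, h5 a ha1 ha2, h6 a ha1 ha2, ih a ha1 ha2⟩)
    refine ⟨C, BC, hbwC, hBC, huBC, ?_, hfullC, ?_⟩
    · intro z hz
      rcases hinv z hz with rfl | ⟨a, has, hbr⟩
      · exact br_self hT h2.symm
      · exact br_mono hT h2.symm ((hmem a).mp has).1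
          (fun h => ((hmem a).mp has).2 h.symm) hbr
    · intro a ha hne
      exact hsC a ((hmem a).mpr ⟨ha, hne⟩)

lemma allblocked_obstr [Fintype V] (hT : T.IsTree) {U : Set V} (hU : IsIndepSet T U) {u₀ : V}
    (hab : S8AllBlocked T U u₀) :
    ∃ V' : Set V, (∀ w ∈ U ∩ V', ∀ z, T.Adj w z → z ∈ V') ∧ BWTree T V' (U ∩ V') := by
  obtain ⟨hu₀, hblk⟩ := hab
  by_cases hex : ∃ a, T.Adj u₀ a
  · obtain ⟨b₀, hb₀⟩ := hex
    have hF₀ : S8Forced T U u₀ b₀ := forced_of_blocked hu₀ hb₀ (fun a ha _ => hblk a ha)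
    obtain ⟨bs, us, hbb, hbne, hbu, huU, hF⟩ := hblk b₀ hb₀
    obtain ⟨V1, B1, hbw1, hB1, hu1, hbr1, hfull1, hnb1⟩ := forced_hang hT hU hF₀
    obtain ⟨V2, B2, hbw2, hB2, hu2, hbr2, hfull2, hnb2⟩ := forced_hang hT hU hF
    have hb₀U : b₀ ∉ U := not_mem_U_of_adj hU hu₀ hb₀
    have hbU : bs ∉ U := not_mem_U_of_adj hU huU hbu.symm
    have hb₀us : b₀ ≠ us := fun h => hb₀U (h ▸ huU)
    have hnadj : ¬ T.Adj b₀ us := fun h => no_triangle hT hbb hbu h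
    have hbr1' : ∀ z ∈ V1, z ∈ Branch T b₀ u₀ := hbr1
    have hb₀V1 : b₀ ∉ V1 := by
      intro h
      have := hbr1 b₀ h
      rw [br_mem_iff hT hb₀.symm] at this
      simp [SimpleGraph.dist_self] at this
    have hbV1 : bs ∉ V1 := by
      intro h
      have h9 := hbr1 bs h
      rw [br_mem_iff hT hb₀.symm] at h9
      have d1 : T.dist bs b₀ = 1 := SimpleGraph.dist_eq_one_iff_adj.mpr hbb.symm
      exact hbne (dist_zero hT (by omega))
    have hb₀V2 : b₀ ∉ V2 := by
      intro h
      have h9 := hbr2 b₀ h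
      rw [br_mem_iff hT hbu] at h9
      have d1 : T.dist b₀ bs = 1 := SimpleGraph.dist_eq_one_iff_adj.mpr hbb
      exact hb₀us (dist_zero hT (by omega))
    have hbV2 : bs ∉ V2 := by
      intro h
      have h9 := hbr2 bs h
      rw [br_mem_iff hT hbu] at h9
      simp [SimpleGraph.dist_self] at h9
    have hV2br : ∀ z ∈ V2, z ∈ Branch T u₀ b₀ := by
      intro z hz
      exact br_mono hT hb₀ hbb (Ne.symm hbne)
        (br_mono hT hbb hbu hb₀us (hbr2 z hz))
    have hwn1 : ∀ w, (w = b₀ ∨ w = bs) → w ∉ Branch T b₀ u₀ := by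
      intro w hw h9
      rw [br_mem_iff hT hb₀.symm] at h9
      rcases hw with h8 | h8 <;> rw [h8] at h9
      · simp [SimpleGraph.dist_self] at h9
      · have d1 : T.dist bs b₀ = 1 := SimpleGraph.dist_eq_one_iff_adj.mpr hbb.symm
        exact hbne (dist_zero hT (by omega))
    have hwn2 : ∀ w, (w = b₀ ∨ w = bs) → w ∉ Branch T bs us := by
      intro w hw h9
      rw [br_mem_iff hT hbu] at h9
      rcases hw with h8 | h8 <;> rw [h8] at h9
      · have d1 : T.dist b₀ bs = 1 := SimpleGraph.dist_eq_one_iff_adj.mpr hbb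
        exact hb₀us (dist_zero hT (by omega))
      · simp [SimpleGraph.dist_self] at h9
    have hmerge := bw_merge hbw2 V1 B1 u₀ us b₀ bs hbw1 hu1 hu2 hb₀ hbb hbu hnadj
      hb₀V1 hb₀V2 hbV1 hbV2 hbb.ne
      (fun z hz h => br_opp (hV2br z h) (hbr1 z hz))
      (by
        intro z hz z' hz' hadj'
        have := br_exit hT hb₀.symm (hbr1 z hz) (br_opp (hV2br z' hz')) hadj'
        exact hb₀V2 (this.2 ▸ hz'))
      (by
        intro z hz w hw hadj'
        exact br_exit hT hb₀.symm (hbr1 z hz) (hwn1 w hw) hadj')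
      (by
        intro z hz w hw hadj'
        exact br_exit hT hbu (hbr2 z hz) (hwn2 w hw) hadj')
    have hBeq : U ∩ (V1 ∪ ({b₀, bs} ∪ V2)) = B1 ∪ B2 := by
      rw [hB1, hB2]
      ext z
      simp only [Set.mem_union, Set.mem_inter_iff, Set.mem_insert_iff, Set.mem_singleton_iff]
      constructor
      · rintro ⟨h1, h2 | h2 | h2⟩
        · exact Or.inl ⟨h1, h2⟩
        · exfalso
          rcases h2 with rfl | rfl
          exacts [hb₀U h1, hbU h1]
        · exact Or.inr ⟨h1, h2⟩
      · rintro (⟨h1, h2⟩ | ⟨h1, h2⟩)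
        · exact ⟨h1, Or.inl h2⟩
        · exact ⟨h1, Or.inr (Or.inr h2)⟩
    refine ⟨V1 ∪ ({b₀, bs} ∪ V2), ?_, ?_⟩
    · rw [hBeq]
      intro w hw z hadj'
      rcases hw with hw | hw
      · by_cases hcase : w = u₀
        · subst hcase
          by_cases hzb : z = b₀
          · exact Or.inr (Set.mem_union_left _ (by simp [hzb]))
          · exact Or.inl (hnb1 z hadj' hzb)
        · exact Or.inl (hfull1 w hw hcase z hadj')
      · by_cases hcase : w = us
        · subst hcase
          by_cases hzb : z = bs
          · exact Or.inr (Set.mem_union_left _ (by simp [hzb]))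
          · exact Or.inr (Set.mem_union_right _ (hnb2 z hadj' hzb))
        · exact Or.inr (Set.mem_union_right _ (hfull2 w hw hcase z hadj'))
    · rw [hBeq]
      exact hmerge
  · push_neg at hex
    refine ⟨{u₀}, ?_, ?_⟩
    · intro w hw z hadj'
      rw [Set.mem_inter_iff, Set.mem_singleton_iff] at hw
      exact absurd (hw.2 ▸ hadj') (hex z)
    · have h9 : U ∩ {u₀} = {u₀} := by
        ext z
        simp only [Set.mem_inter_iff, Set.mem_singleton_iff]
        constructor
        · tauto
        · rintro rfl; exact ⟨hu₀, rfl⟩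
      rw [h9]
      exact BWTree.base u₀

end S8

/-- Let `T` be a finite tree and `U` an independent set of vertices. Then
`(T, U)` is a yes-instance of Ext VC iff there is no subtree `T'` of `T` (i.e., a connected
induced subgraph, given by its vertex set `V'`) that is induced edge full with respect to
`(T, U)` (every `u ∈ U ∩ V'` has the same degree in `T'` as in `T`, i.e., all its neighbors
lie in `V'`) such that `T'[(U ∩ V') → black]` belongs to the class `𝒯`. -/
theorem statement_8 {V : Type*} [Fintype V] (T : SimpleGraph V) (hT : T.IsTree)
    (U : Set V) (hU : IsIndepSet T U) :
    ExtVC T U ↔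
      ¬ ∃ V' : Set V, (T.induce V').Connected ∧
          (∀ u ∈ U ∩ V', T.neighborSet u ⊆ V') ∧
          BWTree T V' (U ∩ V') := by
  constructor
  · rintro hExt ⟨V', hconn, hfull, hbw⟩
    obtain ⟨D, hind, hDU, hdom⟩ := S8.sel_of_extVC hExt
    apply S8.bw_sound hbw D hind
    · intro x hx hxD
      exact hDU x hxD hx.1
    · intro u hu
      obtain ⟨d, hdD, hadj⟩ := hdom u hu.1
      exact ⟨d, hdD, hfull u hu hadj, hadj⟩
  · intro hno
    by_contra hnot
    have hnsel : ¬ S8.Sel T U := fun hs => hnot (S8.extVC_of_sel hs)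
    have hexab : ∃ u, S8AllBlocked T U u := by
      by_contra hc
      push_neg at hc
      exact hnsel (S8.sel_of_no_allblocked hT hU hc)
    obtain ⟨u₀, hab⟩ := hexab
    obtain ⟨V', hfull, hbw⟩ := S8.allblocked_obstr hT hU hab
    exact hno ⟨V', S8.bw_connected hbw, fun u hu z hz => hfull u hu z hz, hbw⟩
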